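/- Let d ≥ 1, ξ ≥ 0, and set A := ξ•(Φ_d − (1/d²)•I), a Hermitian matrix indexed by (Fin d × Fin d), where I is the identity. Then the partial trace over the second tensor factor of the absolute value of A is a scalar matrix: the d×d matrix with entries (a,b) ↦ ∑_{k} (√(AᴴA))((a,k),(b,k)) equals (2(d²−1)ξ/d³)•I_d, where I_d is the d×d identity matrix. -/

import Mathlib

open Matrix
open scoped ComplexOrder

open Classical in
/-- Positive semidefinite square root of a matrix (zero if not PSD). -/
noncomputable def msqrt {n : Type*} [Fintype n] [DecidableEq n] (A : Matrix n n ℂ) :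
    Matrix n n ℂ :=
  if h : A.PosSemidef then
    h.1.eigenvectorUnitary.1 * diagonal ((↑) ∘ (√·) ∘ h.1.eigenvalues) *
      (star h.1.eigenvectorUnitary : Matrix n n ℂ)
  else 0

/-- The maximally entangled projector `Φ_d`. -/
noncomputable def maxEnt (d : ℕ) : Matrix (Fin d × Fin d) (Fin d × Fin d) ℂ :=
  Matrix.of fun p q => if p.1 = p.2 ∧ q.1 = q.2 then 1 / (d : ℂ) else 0

lemma maxEnt_herm (d : ℕ) : (maxEnt d)ᴴ = maxEnt d := by
  ext p q
  simp only [conjTranspose_apply, maxEnt, of_apply]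
  by_cases h1 : q.1 = q.2 <;> by_cases h2 : p.1 = p.2 <;> simp [h1, h2]

lemma maxEnt_idem (d : ℕ) (hd : 1 ≤ d) : maxEnt d * maxEnt d = maxEnt d := by
  have hd0 : (d : ℂ) ≠ 0 := Nat.cast_ne_zero.mpr (by omega)
  ext p q
  rw [mul_apply, Fintype.sum_prod_type]
  simp only [maxEnt, of_apply]
  by_cases h1 : p.1 = p.2 <;> by_cases h2 : q.1 = q.2 <;>
    simp [h1, h2, Finset.sum_ite_eq]
  field_simp

lemma proj_mix {n : Type*} [Fintype n] [DecidableEq n] {p : Matrix n n ℂ} (hp : p * p = p)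
    (a b c e : ℂ) :
    (a • p + b • (1 - p)) * (c • p + e • (1 - p)) = (a * c) • p + (b * e) • (1 - p) := by
  have h1 : p * (1 - p) = 0 := by rw [mul_sub, mul_one, hp, sub_self]
  have h2 : (1 - p) * p = 0 := by rw [sub_mul, one_mul, hp, sub_self]
  have h3 : (1 - p) * (1 - p) = 1 - p := by
    rw [sub_mul, one_mul, mul_sub, mul_one, hp, sub_self, sub_zero]
  simp only [add_mul, mul_add, smul_mul_assoc, mul_smul_comm, hp, h1, h2, h3, smul_zero,
    add_zero, zero_add, smul_smul]
  rw [mul_comm c a, mul_comm e b]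

theorem partial_trace_abs_isotropic_difference_scalar (d : ℕ) (hd : 1 ≤ d) (ξ : ℝ) (hξ : 0 ≤ ξ)
    (A : Matrix (Fin d × Fin d) (Fin d × Fin d) ℂ)
    (hA : A = ξ • (maxEnt d - ((1 : ℝ) / (d : ℝ) ^ 2) •
        (1 : Matrix (Fin d × Fin d) (Fin d × Fin d) ℂ))) :
    (Matrix.of fun a b : Fin d => ∑ k : Fin d, msqrt (Aᴴ * A) (a, k) (b, k)) =
      ((2 * ((d : ℝ) ^ 2 - 1) * ξ / (d : ℝ) ^ 3 : ℝ) : ℂ) • (1 : Matrix (Fin d) (Fin d) ℂ) := by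
  obtain ⟨r₁, hr₁def⟩ : ∃ r : ℝ, r = ξ * (1 - 1 / (d : ℝ) ^ 2) := ⟨_, rfl⟩
  obtain ⟨r₂, hr₂def⟩ : ∃ r : ℝ, r = ξ / (d : ℝ) ^ 2 := ⟨_, rfl⟩
  have hdR : (1 : ℝ) ≤ (d : ℝ) := by exact_mod_cast hd
  have hd0R : (d : ℝ) ≠ 0 := by positivity
  have hd0 : (d : ℂ) ≠ 0 := Nat.cast_ne_zero.mpr (by omega)
  set Φ := maxEnt d with hΦ
  have hr₁ : 0 ≤ r₁ := by
    rw [hr₁def]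
    apply mul_nonneg hξ
    have : 1 / (d : ℝ) ^ 2 ≤ 1 := by
      rw [div_le_one (by positivity)]
      nlinarith
    linarith
  have hr₂ : 0 ≤ r₂ := by rw [hr₂def]; exact div_nonneg hξ (by positivity)
  -- representation of A
  have hArep : A = ((r₁ : ℂ)) • Φ + ((-r₂ : ℝ) : ℂ) • (1 - Φ) := by
    rw [hA]
    match_scalars <;>
      simp only [hr₁def, hr₂def, Complex.coe_algebraMap] <;>
      push_cast <;> field_simp <;> try ring
  have hAherm : Aᴴ = A := by
    rw [hArep]
    simp [conjTranspose_add, conjTranspose_smul, maxEnt_herm, conjTranspose_sub,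
      Complex.star_def, Complex.conj_ofReal, hΦ]
  obtain ⟨s₁, hs₁def⟩ : ∃ s : ℝ, s = Real.sqrt r₁ := ⟨_, rfl⟩
  obtain ⟨s₂, hs₂def⟩ : ∃ s : ℝ, s = Real.sqrt r₂ := ⟨_, rfl⟩
  set S := ((s₁ : ℂ)) • Φ + ((s₂ : ℂ)) • (1 - Φ) with hSdef
  set B := ((r₁ : ℂ)) • Φ + ((r₂ : ℂ)) • (1 - Φ) with hBdef
  have hSherm : Sᴴ = S := by
    rw [hSdef]
    simp [conjTranspose_add, conjTranspose_smul, maxEnt_herm, conjTranspose_sub,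
      Complex.star_def, Complex.conj_ofReal, hΦ]
  have hSS : Sᴴ * S = B := by
    rw [hSherm, hSdef, proj_mix (maxEnt_idem d hd), hBdef]
    congr 1
    · norm_cast
      rw [hs₁def, Real.mul_self_sqrt hr₁]
    · norm_cast
      rw [hs₂def, Real.mul_self_sqrt hr₂]
  have hBpos : B.PosSemidef := hSS ▸ posSemidef_conjTranspose_mul_self S
  have hAApos : (Aᴴ * A).PosSemidef := posSemidef_conjTranspose_mul_self A
  have hBsq : B ^ 2 = Aᴴ * A := by
    rw [hAherm, hArep, sq, hBdef, proj_mix (maxEnt_idem d hd), proj_mix (maxEnt_idem d hd)]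
    congr 1 <;> norm_cast <;> ring
  have hsqrt : msqrt (Aᴴ * A) = B := by
    rw [msqrt, dif_pos hAApos]
    open scoped MatrixOrder in
    have e : hAApos.1.eigenvectorUnitary.1 * diagonal ((↑) ∘ (√·) ∘ hAApos.1.eigenvalues) *
        (star hAApos.1.eigenvectorUnitary : Matrix _ _ ℂ) = cfc Real.sqrt (Aᴴ * A) := by
      rw [hAApos.1.cfc_eq]; rfl
    open scoped MatrixOrder in
    rw [e, ← cfcₙ_eq_cfc, ← CFC.sqrt_eq_real_sqrt (Aᴴ * A) hAApos.nonneg]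
    open scoped MatrixOrder in
    exact CFC.sqrt_unique (by rw [← hBsq, sq]) hBpos.nonneg
  rw [hsqrt, hBdef]
  ext a b
  simp only [of_apply, Matrix.add_apply, Matrix.smul_apply, Matrix.sub_apply, one_apply, hΦ, maxEnt,
    smul_eq_mul, Prod.mk.injEq]
  by_cases hab : a = b
  · subst hab
    simp only [and_self, eq_self_iff_true, if_true, true_and]
    rw [Finset.sum_add_distrib]
    simp only [mul_ite, mul_zero, mul_one, mul_sub]
    rw [Finset.sum_ite_eq, Finset.sum_sub_distrib, Finset.sum_ite_eq, Finset.sum_const,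
      Finset.card_univ]
    simp only [Finset.mem_univ, if_true, Fintype.card_fin, nsmul_eq_mul, Matrix.smul_apply,
      one_apply_eq, smul_eq_mul, mul_one]
    rw [hr₁def, hr₂def]
    push_cast
    field_simp
    try push_cast
    try ring
  · have hz : ∀ k : Fin d, ¬(a = k ∧ b = k) := by rintro k ⟨rfl, rfl⟩; exact hab rfl
    simp [hab, hz]
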